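/- Let L and J be subspaces of a finite-dimensional complex inner product space H, let ι_L : L → H be the inclusion and P_{J^⊥} the orthogonal projection onto J^⊥. Then det((P_{J^⊥} ι_L)* (P_{J^⊥} ι_L)) ≤ 1, with equality if and only if L and J are orthogonal. -/

import Mathlib

open scoped ComplexOrder

/-- The composition `P_{Jᗮ} ∘ ι_L : L → H` of the inclusion of `L` with the orthogonal
projection onto `Jᗮ`. -/
noncomputable def projIncl {H : Type*} [NormedAddCommGroup H] [InnerProductSpace ℂ H]
    [FiniteDimensional ℂ H] (L J : Submodule ℂ H) : ↥L →ₗ[ℂ] H :=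
  Jᗮ.subtype ∘ₗ (Jᗮ.orthogonalProjection).toLinearMap ∘ₗ L.subtype

set_option maxHeartbeats 1000000 in
/-- `det ((P_{Jᗮ} ι_L)* (P_{Jᗮ} ι_L)) ≤ 1`, with equality iff `L ⊥ J`: nonnegativity of the
log-determinant mutual information `I(L;J)`, vanishing exactly for orthogonal subspaces. -/
theorem stmt_10 {H : Type*} [NormedAddCommGroup H] [InnerProductSpace ℂ H]
    [FiniteDimensional ℂ H] (L J : Submodule ℂ H) :
    LinearMap.det (LinearMap.adjoint (projIncl L J) ∘ₗ projIncl L J) ≤ 1 ∧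
      (LinearMap.det (LinearMap.adjoint (projIncl L J) ∘ₗ projIncl L J) = 1 ↔
        ∀ x ∈ L, ∀ y ∈ J, (inner ℂ x y : ℂ) = 0) := by
  classical
  set T := projIncl L J with hT
  set A := LinearMap.adjoint T ∘ₗ T with hA
  have hinner : ∀ x y : L, (inner ℂ (A x) y : ℂ) = inner ℂ (T x) (T y) := by
    intro x y
    simp [hA, LinearMap.adjoint_inner_left]
  have hle : ∀ x : L, ‖T x‖ ≤ ‖x‖ := by
    intro x
    have : T x = (Jᗮ.orthogonalProjection (x : H) : H) := rfl
    rw [this]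
    calc ‖(Jᗮ.orthogonalProjection (x : H) : H)‖
        ≤ ‖Jᗮ.orthogonalProjection‖ * ‖(x : H)‖ :=
          (Jᗮ.orthogonalProjection).le_opNorm _
      _ ≤ 1 * ‖(x : H)‖ := by
          gcongr
          exact Submodule.orthogonalProjectionOnto_norm_le _
      _ = ‖x‖ := by rw [one_mul]; rfl
  have hsymm : A.IsSymmetric := by
    intro x y
    simp [hA, LinearMap.adjoint_inner_left, LinearMap.adjoint_inner_right]
  have hn : Module.finrank ℂ ↥L = Module.finrank ℂ ↥L := rfl
  set b := hsymm.eigenvectorBasis hn with hb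
  set μ := hsymm.eigenvalues hn with hμ
  have hdet : LinearMap.det A = ∏ i, (μ i : ℂ) := by
    rw [← LinearMap.det_toMatrix b.toBasis]
    have hmat : LinearMap.toMatrix b.toBasis b.toBasis A =
        Matrix.diagonal fun i => (μ i : ℂ) := by
      ext i j
      rw [LinearMap.toMatrix_apply, hb]
      simp only [OrthonormalBasis.coe_toBasis, hsymm.apply_eigenvectorBasis, map_smul,
        Module.Basis.repr_self_apply, Matrix.diagonal]
      rcases eq_or_ne i j with h | h
      · subst h; simp [← hμ, ← hb]
      · simp [← hμ, ← hb, h, Ne.symm h, Finsupp.single_apply]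
    rw [hmat, Matrix.det_diagonal]
  have hkey : ∀ i, (μ i : ℝ) = ‖T (b i)‖ ^ 2 := by
    intro i
    have h1 := hinner (b i) (b i)
    rw [hsymm.apply_eigenvectorBasis, inner_smul_left, inner_self_eq_norm_sq_to_K,
      inner_self_eq_norm_sq_to_K] at h1
    have hb1 : ‖b i‖ = 1 := b.orthonormal.1 i
    simp only [Complex.conj_ofReal, RCLike.conj_ofReal] at h1
    have h2 : μ i * ‖b i‖ ^ 2 = ‖T (b i)‖ ^ 2 := by exact_mod_cast h1
    simpa [hb1] using h2
  have hμ0 : ∀ i, 0 ≤ μ i := fun i => by rw [hkey i]; positivity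
  have hμ1 : ∀ i, μ i ≤ 1 := by
    intro i
    rw [hkey i]
    have hb1 : ‖b i‖ = 1 := b.orthonormal.1 i
    have := hle (b i)
    rw [hb1] at this
    nlinarith [norm_nonneg (T (b i))]
  constructor
  · rw [hdet, ← Complex.ofReal_prod, ← Complex.ofReal_one]
    rw [Complex.real_le_real]
    exact Finset.prod_le_one (fun i _ => hμ0 i) (fun i _ => hμ1 i)
  constructor
  · -- det = 1 → orthogonal
    intro hdet1
    have hprod : ∏ i, μ i = 1 := by
      rw [hdet, ← Complex.ofReal_prod, ← Complex.ofReal_one] at hdet1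
      exact_mod_cast hdet1
    have hμeq : ∀ j, μ j = 1 := by
      intro j
      refine le_antisymm (hμ1 j) ?_
      have h2 : ∏ i, μ i ≤ ∏ i, (if i = j then μ i else 1 : ℝ) := by
        refine Finset.prod_le_prod (fun i _ => hμ0 i) fun i _ => ?_
        by_cases h : i = j <;> simp [h, hμ1 i]
      rw [Finset.prod_ite_eq' Finset.univ j μ] at h2
      simpa [hprod] using h2
    have hAid : A = LinearMap.id := by
      apply b.toBasis.ext
      intro i
      rw [OrthonormalBasis.coe_toBasis, show A (b i) = (μ i : ℂ) • b i from hsymm.apply_eigenvectorBasis hn i]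
      simp only [OrthonormalBasis.coe_toBasis, hsymm.apply_eigenvectorBasis,
        LinearMap.id_coe, id_eq, ← hμ, ← hb, hμeq i, Complex.ofReal_one, one_smul]
    intro x hx y hy
    -- show (x : H) ∈ Jᗮ
    have hnorm : ‖T ⟨x, hx⟩‖ = ‖(⟨x, hx⟩ : L)‖ := by
      have h1 := hinner ⟨x, hx⟩ ⟨x, hx⟩
      rw [hAid] at h1
      simp only [LinearMap.id_coe, id_eq] at h1
      rw [inner_self_eq_norm_sq_to_K, inner_self_eq_norm_sq_to_K] at h1
      have h2 : ‖(⟨x, hx⟩ : L)‖ ^ 2 = ‖T ⟨x, hx⟩‖ ^ 2 := by exact_mod_cast h1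
      nlinarith [norm_nonneg (T (⟨x, hx⟩ : L)), norm_nonneg (⟨x, hx⟩ : L)]
    set p : H := (Jᗮ.orthogonalProjection x : H) with hp
    have hTx : T ⟨x, hx⟩ = p := rfl
    have hxL : ‖(⟨x, hx⟩ : L)‖ = ‖x‖ := rfl
    have hop : (inner ℂ p (x - p) : ℂ) = 0 :=
      Submodule.inner_right_of_mem_orthogonal (Jᗮ.orthogonalProjection x).2
        (Submodule.sub_starProjection_mem_orthogonal (K := Jᗮ) x)
    have hpyth : ‖x‖ * ‖x‖ = ‖p‖ * ‖p‖ + ‖x - p‖ * ‖x - p‖ := by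
      have := norm_add_sq_eq_norm_sq_add_norm_sq_of_inner_eq_zero p (x - p) hop
      simpa using this
    have hpx : ‖p‖ = ‖x‖ := by rw [← hTx, hnorm, hxL]
    have hxp : x = p := by
      rw [hpx] at hpyth
      have h0 : ‖x - p‖ * ‖x - p‖ = 0 := by linarith
      exact sub_eq_zero.mp (norm_eq_zero.mp (mul_self_eq_zero.mp h0))
    have hxo : x ∈ Jᗮ := by rw [hxp]; exact (Jᗮ.orthogonalProjection x).2
    exact Submodule.inner_left_of_mem_orthogonal hy hxo
  · -- orthogonal → det = 1
    intro h
    have hmem : ∀ x : L, (x : H) ∈ Jᗮ := by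
      intro x
      rw [Submodule.mem_orthogonal]
      intro u hu
      have h0 := h x x.2 u hu
      rw [← inner_conj_symm]
      simp [h0]
    have hTx : ∀ x : L, T x = (x : H) := by
      intro x
      show (Jᗮ.orthogonalProjection (x : H) : H) = x
      exact Submodule.starProjection_eq_self_iff.mpr (hmem x)
    have hAid : A = LinearMap.id := by
      refine LinearMap.ext fun x => ?_
      refine ext_inner_right ℂ fun y => ?_
      rw [hinner x y, hTx x, hTx y]
      simp [Submodule.coe_inner]
    rw [hAid, LinearMap.det_id]
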